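/- Let k ≥ 2 be an integer, let X be a real 2×2 matrix, and let Y be a real symmetric positive semidefinite 2×2 matrix. Then the following are equivalent: (i) the complex Hermitian matrices Y + i(Ω₁ − XΩ₁Xᵀ) and Y + iXΩ₁Xᵀ + (1−2/k)·iΩ₁ are both positive semidefinite; (ii) √(det Y) ≥ 1 − 1/k + |det X − 1/k|. -/

import Mathlib

open Matrix Complex ComplexOrder

/-- The standard symplectic form on one mode. -/
noncomputable def Omega1 : Matrix (Fin 2) (Fin 2) ℝ := !![0, 1; -1, 0]

/-- Complexification of a real matrix. -/
noncomputable def cplx {m p : Type*} (M : Matrix m p ℝ) : Matrix m p ℂ :=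
  M.map (fun x => (x : ℂ))


lemma amgm (A B s : ℝ) (hA : 0 ≤ A) (hB : 0 ≤ B) (hs : s^2 ≤ A*B) : 0 ≤ A + B + 2*s := by
  nlinarith [sq_nonneg (A - B), sq_nonneg (A + B), sq_nonneg (A + B + 2*s)]

lemma quad_nonneg (y00 y01 y11 c a b e f : ℝ) (h0 : 0 ≤ y00) (h1 : 0 ≤ y11)
    (hd : y01^2 + c^2 ≤ y00*y11) :
    0 ≤ y00*(a^2+b^2) + y11*(e^2+f^2) + 2*(y01*(a*e+b*f) + c*(b*e-a*f)) := by
  have hp : (0:ℝ) ≤ a^2+b^2 := by positivity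
  have hq : (0:ℝ) ≤ e^2+f^2 := by positivity
  have hs : (y01*(a*e+b*f) + c*(b*e-a*f))^2 ≤ (y00*(a^2+b^2))*(y11*(e^2+f^2)) := by
    nlinarith [sq_nonneg (y01*(b*e-a*f) - c*(a*e+b*f)), mul_nonneg (mul_nonneg hp hq) (sub_nonneg.2 hd)]
  exact amgm _ _ _ (mul_nonneg h0 hp) (mul_nonneg h1 hq) hs

lemma quad_forward (y00 y01 y11 c : ℝ) (h0 : 0 ≤ y00)
    (hq : ∀ s t u v : ℝ,
      0 ≤ y00*(s^2+t^2) + y11*(u^2+v^2) + 2*(y01*(s*u+t*v) + c*(t*u-s*v))) :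
    y01^2 + c^2 ≤ y00*y11 := by
  rcases eq_or_lt_of_le h0 with h | h
  · by_contra hcon
    push_neg at hcon
    have hz : y00 * y11 = 0 := by rw [← h]; ring
    have hw : 0 < y01^2 + c^2 := by linarith
    set t' : ℝ := -(y11 + 1) / (2 * (y01^2 + c^2)) with ht'
    have hE := hq (t'*y01) (t'*c) 1 0
    have htv : t' * (y01^2 + c^2) = -(y11+1)/2 := by
      rw [ht', div_mul_eq_mul_div, div_eq_iff (ne_of_gt (by linarith))]
      ring
    nlinarith [hE, htv]
  · have hE := hq (-y01) (-c) y00 0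
    nlinarith [hE]

lemma key (Y : Matrix (Fin 2) (Fin 2) ℝ) (hY : Y.PosSemidef) (c : ℝ) :
    (cplx Y + (c * Complex.I) • cplx Omega1).PosSemidef ↔ c^2 ≤ Y.det := by
  set M := cplx Y + (c * Complex.I) • cplx Omega1 with hM
  have hsym : Y 1 0 = Y 0 1 := by
    have := congrFun (congrFun hY.1 0) 1
    simpa [Matrix.conjTranspose_apply] using this
  have hy00 : 0 ≤ Y 0 0 := by
    have := hY.dotProduct_mulVec_nonneg (Pi.single 0 1)
    simpa [dotProduct, Matrix.mulVec, Fin.sum_univ_two, Pi.single_apply] using this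
  have hy11 : 0 ≤ Y 1 1 := by
    have := hY.dotProduct_mulVec_nonneg (Pi.single 1 1)
    simpa [dotProduct, Matrix.mulVec, Fin.sum_univ_two, Pi.single_apply] using this
  have hdet : Y.det = Y 0 0 * Y 1 1 - Y 0 1 ^ 2 := by
    rw [Matrix.det_fin_two, hsym]; ring
  have hE : ∀ x : Fin 2 → ℂ, star x ⬝ᵥ M *ᵥ x =
      ((Y 0 0 * ((x 0).re^2 + (x 0).im^2) + Y 1 1 * ((x 1).re^2 + (x 1).im^2)
        + 2*(Y 0 1 * ((x 0).re*(x 1).re + (x 0).im*(x 1).im)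
          + c*((x 0).im*(x 1).re - (x 0).re*(x 1).im)) : ℝ) : ℂ) := by
    intro x
    simp only [hM, dotProduct, Matrix.mulVec, Fin.sum_univ_two, Pi.star_apply,
      Matrix.add_apply, Matrix.smul_apply, cplx, Matrix.map_apply, Omega1,
      Matrix.cons_val', Matrix.cons_val_zero, Matrix.cons_val_one, Matrix.head_cons,
      Matrix.empty_val', Matrix.cons_val_fin_one, Matrix.head_fin_const, smul_eq_mul]
    apply Complex.ext <;>
      simp [Complex.ext_iff, Complex.add_re, Complex.add_im, Complex.mul_re, Complex.mul_im,
        hsym, ← Complex.ofReal_pow] <;> ring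
  rw [Matrix.posSemidef_iff_dotProduct_mulVec]
  constructor
  · rintro ⟨-, h2⟩
    rw [hdet, ← sub_nonneg]
    have hq : ∀ s t u v : ℝ,
        0 ≤ Y 0 0*(s^2+t^2) + Y 1 1*(u^2+v^2)
          + 2*(Y 0 1*(s*u+t*v) + c*(t*u-s*v)) := by
      intro s t u v
      have := h2 ![⟨s, t⟩, ⟨u, v⟩]
      rw [hE] at this
      rw [Complex.le_def] at this
      obtain ⟨hre, -⟩ := this
      simpa [← Complex.ofReal_pow] using hre
    have := quad_forward (Y 0 0) (Y 0 1) (Y 1 1) c hy00 hq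
    linarith
  · intro hc
    have hdY : Y 0 1 ^ 2 + c ^ 2 ≤ Y 0 0 * Y 1 1 := by rw [hdet] at hc; linarith
    constructor
    · ext i j
      rw [Matrix.conjTranspose_apply]
      fin_cases i <;> fin_cases j <;>
        simp [hM, cplx, Omega1, Matrix.add_apply, Matrix.smul_apply, Matrix.map_apply, hsym,
          Complex.ext_iff]
    · intro x
      rw [hE, Complex.le_def]
      refine ⟨?_, by simp [← Complex.ofReal_pow]⟩
      simp only [Complex.ofReal_re, Complex.zero_re]
      have := quad_nonneg (Y 0 0) (Y 0 1) (Y 1 1) c (x 0).re (x 0).im (x 1).re (x 1).im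
        hy00 hy11 hdY
      linarith [this]


lemma cplx_smul' (r : ℝ) (M : Matrix (Fin 2) (Fin 2) ℝ) :
    cplx (r • M) = (r : ℂ) • cplx M := by
  ext i j
  simp [cplx]

lemma hXOX (X : Matrix (Fin 2) (Fin 2) ℝ) : X * Omega1 * Xᵀ = X.det • Omega1 := by
  ext i j
  fin_cases i <;> fin_cases j <;>
    simp [Omega1, Matrix.mul_apply, Fin.sum_univ_two, Matrix.det_fin_two,
      Matrix.transpose_apply] <;> ring

/-- A single-mode Gaussian channel `V ↦ XVXᵀ + Y` is completely positive and
`k`-extendible if and only if `√(det Y) ≥ 1 − 1/k + |det X − 1/k|`. -/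
theorem single_mode_channel_k_ext_iff
    (k : ℕ) (hk : 2 ≤ k)
    (X Y : Matrix (Fin 2) (Fin 2) ℝ) (hY : Y.PosSemidef) :
    ((cplx Y + Complex.I • cplx (Omega1 - X * Omega1 * Xᵀ)).PosSemidef ∧
      (cplx Y + Complex.I • cplx (X * Omega1 * Xᵀ)
        + ((1 - 2/(k:ℂ)) * Complex.I) • cplx Omega1).PosSemidef)
    ↔
    Real.sqrt Y.det ≥ 1 - 1/(k:ℝ) + |X.det - 1/(k:ℝ)| := by
  have e1 : cplx Y + Complex.I • cplx (Omega1 - X * Omega1 * Xᵀ)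
      = cplx Y + ((↑(1 - X.det)) * Complex.I) • cplx Omega1 := by
    rw [hXOX]
    congr 1
    rw [show Omega1 - X.det • Omega1 = (1 - X.det) • Omega1 by module]
    rw [cplx_smul', smul_smul, mul_comm]
  have e2 : cplx Y + Complex.I • cplx (X * Omega1 * Xᵀ)
        + ((1 - 2/(k:ℂ)) * Complex.I) • cplx Omega1
      = cplx Y + ((↑(X.det + 1 - 2/(k:ℝ))) * Complex.I) • cplx Omega1 := by
    rw [hXOX, cplx_smul', smul_smul, add_assoc]
    congr 1
    rw [← add_smul]
    congr 1
    push_cast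
    ring
  rw [e1, e2, key Y hY (1 - X.det), key Y hY (X.det + 1 - 2/(k:ℝ))]
  set d := X.det with hd
  set D := Y.det with hD'
  have hkr : (2:ℝ) ≤ (k:ℝ) := by exact_mod_cast hk
  have hkr0 : (0:ℝ) < (k:ℝ) := by linarith
  have hik : 1/(k:ℝ) ≤ 1/2 := by
    rw [div_le_div_iff₀ hkr0 (by norm_num)]; linarith
  have hik0 : 0 < 1/(k:ℝ) := by positivity
  have hc : (0:ℝ) ≤ 1 - 1/(k:ℝ) := by linarith
  have ht : (0:ℝ) ≤ 1 - 1/(k:ℝ) + |d - 1/(k:ℝ)| := by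
    have := abs_nonneg (d - 1/(k:ℝ)); linarith
  constructor
  · rintro ⟨h1, h2⟩
    have hD : 0 ≤ D := le_trans (sq_nonneg _) h1
    rw [ge_iff_le, Real.le_sqrt ht hD]
    rcases abs_cases (d - 1/(k:ℝ)) with ⟨he, hs⟩ | ⟨he, hs⟩
    · rw [he, show (1 - 1/(k:ℝ) + (d - 1/(k:ℝ)))^2 = (d + 1 - 2/(k:ℝ))^2 by ring]
      exact h2
    · rw [he, show (1 - 1/(k:ℝ) + -(d - 1/(k:ℝ)))^2 = (1 - d)^2 by ring]
      exact h1
  · intro h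
    have hD : 0 ≤ D := by
      by_contra hneg
      push_neg at hneg
      have h0 : Real.sqrt D = 0 := Real.sqrt_eq_zero_of_nonpos (le_of_lt hneg)
      rw [ge_iff_le, h0] at h
      linarith [abs_nonneg (d - 1/(k:ℝ))]
    rw [ge_iff_le, Real.le_sqrt ht hD] at h
    rcases abs_cases (d - 1/(k:ℝ)) with ⟨he, hs⟩ | ⟨he, hs⟩
    · rw [he, show (1 - 1/(k:ℝ) + (d - 1/(k:ℝ)))^2 = (d + 1 - 2/(k:ℝ))^2 by ring] at h
      have hiden : (d + 1 - 2/(k:ℝ))^2 = (1 - d)^2 + 4*((d - 1/(k:ℝ))*(1 - 1/(k:ℝ))) := by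
        ring
      exact ⟨by linarith [mul_nonneg hs hc], h⟩
    · rw [he, show (1 - 1/(k:ℝ) + -(d - 1/(k:ℝ)))^2 = (1 - d)^2 by ring] at h
      refine ⟨h, ?_⟩
      have hprod : 0 ≤ (1 - 1/(k:ℝ)) * (1/(k:ℝ) - d) :=
        mul_nonneg hc (by linarith)
      have hiden : (1 - d)^2 = (d + 1 - 2/(k:ℝ))^2 + 4*((1 - 1/(k:ℝ))*(1/(k:ℝ) - d)) := by
        ring
      linarith [hprod]
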